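/- arXiv:2312.08355 — 2 statements merged into one kernel-verified Lean document; each statement's English description precedes it below -/
import Mathlib

section
/- Let G be a 3-connected plane graph and let X and W be the bounding cycles of two distinct faces of G. Then X ∩ W is either empty, a single vertex, or a single edge lying on the boundary of both faces. -/
open Equiv

set_option linter.unusedSectionVars false
namespace Surg

section Defs

variable {D : Type}

/-- The orbit setoid of a permutation. -/
def cyc (f : Perm D) : Setoid D :=
  ⟨f.SameCycle,
   ⟨fun _ => Equiv.Perm.SameCycle.refl _ _, fun h => h.symm, fun h h' => h.trans h'⟩⟩

/-- Number of cycles (orbits) of a permutation. -/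
noncomputable def cc (f : Perm D) : ℕ := Nat.card (Quotient (cyc f))

/-- One-step relation generated by two permutations. -/
def stepRel (x y : Perm D) : D → D → Prop := fun p q => q = x p ∨ q = y p

/-- Orbit equivalence of the group generated by two permutations. -/
def connSetoid (x y : Perm D) : Setoid D := Relation.EqvGen.setoid (stepRel x y)

/-- The number of orbits of the group generated by two permutations. -/
noncomputable def kc (x y : Perm D) : ℕ := Nat.card (Quotient (connSetoid x y))

end Defs

section FiniteLemmas

variable {D : Type} [Finite D]

lemma sameCycle_pow {f : Perm D} {x : D} (n : ℕ) : f.SameCycle x ((f ^ n) x) :=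
  ⟨(n : ℤ), by rw [zpow_natCast]⟩

lemma sameCycle_iff_exists_pow {f : Perm D} {x y : D} :
    f.SameCycle x y ↔ ∃ n : ℕ, (f ^ n) x = y := by
  constructor
  · intro h
    obtain ⟨i, _, hi⟩ := h.exists_pow_eq'
    exact ⟨i, hi⟩
  · rintro ⟨n, rfl⟩; exact sameCycle_pow n

lemma pow_fixed {f : Perm D} {x : D} {p : ℕ} (h : (f ^ p) x = x) (k : ℕ) :
    ((f ^ p) ^ k) x = x := by
  induction k with
  | zero => simp
  | succ k ih => rw [pow_succ, Perm.mul_apply, h, ih]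

lemma pow_mod {f : Perm D} {x : D} {p : ℕ} (h : (f ^ p) x = x) (n : ℕ) :
    (f ^ n) x = (f ^ (n % p)) x := by
  conv_lhs => rw [← Nat.div_add_mod n p]
  rw [Nat.add_comm, pow_add, Perm.mul_apply, pow_mul, pow_fixed h]

lemma fixed_of_sameCycle {f : Perm D} {x y : D} (hx : f x = x) (h : f.SameCycle x y) :
    y = x := by
  obtain ⟨n, rfl⟩ := sameCycle_iff_exists_pow.mp h
  have h1 : (f ^ 1) x = x := by simpa using hx
  rw [pow_mod h1 n, Nat.mod_one, pow_zero, Perm.one_apply]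

lemma sameCycle_congr {f g : Perm D} {x y : D}
    (hagree : ∀ z, f.SameCycle x z → g z = f z) (h : f.SameCycle x y) : g.SameCycle x y := by
  obtain ⟨n, rfl⟩ := sameCycle_iff_exists_pow.mp h
  clear h
  have key : ∀ k, (g ^ k) x = (f ^ k) x := by
    intro k
    induction k with
    | zero => simp
    | succ k ih =>
      rw [pow_succ', Perm.mul_apply, ih, pow_succ', Perm.mul_apply]
      exact hagree _ (sameCycle_pow k)
  exact sameCycle_iff_exists_pow.mpr ⟨n, key n⟩

lemma sameCycle_of_sq_fixed {f : Perm D} {a z : D} (h2 : (f ^ 2) a = a)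
    (h : f.SameCycle a z) : z = a ∨ z = f a := by
  obtain ⟨n, rfl⟩ := sameCycle_iff_exists_pow.mp h
  rw [pow_mod h2 n]
  rcases Nat.mod_two_eq_zero_or_one n with h | h <;> rw [h]
  · left; simp
  · right; simp

end FiniteLemmas


variable {D : Type} [Fintype D] [DecidableEq D]

section MergeSplit

variable {w : Perm D} {a b : D}

lemma exists_minimal_hit {x y : D} (hex : ∃ n : ℕ, 0 < n ∧ (w ^ n) x = y) :
    ∃ j : ℕ, 0 < j ∧ (w ^ j) x = y ∧ ∀ k, 0 < k → k < j → (w ^ k) x ≠ y := by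
  classical
  refine ⟨Nat.find hex, (Nat.find_spec hex).1, (Nat.find_spec hex).2, ?_⟩
  intro k hk0 hk hkk
  exact Nat.not_le.mpr hk (Nat.find_le ⟨hk0, hkk⟩)

lemma exists_minimal_period (x : D) :
    ∃ p : ℕ, 0 < p ∧ (w ^ p) x = x ∧ ∀ k, 0 < k → k < p → (w ^ k) x ≠ x :=
  exists_minimal_hit ⟨orderOf w, orderOf_pos w, by rw [pow_orderOf_eq_one]; rfl⟩

/-- Multiplying by a swap of two elements in different cycles merges them. -/
lemma sameCycle_swap_mul_of_not (hab : a ≠ b) (h : ¬ w.SameCycle a b) :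
    (swap a b * w).SameCycle a b := by
  obtain ⟨m, hm0, hma, hmin⟩ := exists_minimal_period (w := w) a
  have key : ∀ k, k < m → ((swap a b * w) ^ k) a = (w ^ k) a := by
    intro k hk
    induction k with
    | zero => simp
    | succ k ih =>
      have hk' : k < m := Nat.lt_of_succ_lt hk
      rw [pow_succ', Perm.mul_apply, ih hk', Perm.mul_apply]
      have h1 : (w ^ (k+1)) a ≠ a := hmin _ (Nat.succ_pos k) hk
      have h2 : (w ^ (k+1)) a ≠ b := fun hfix => h ⟨((k:ℤ)+1), by rw [← hfix]; norm_cast⟩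
      rw [pow_succ', Perm.mul_apply] at h1 h2
      rw [swap_apply_of_ne_of_ne h1 h2, ← Perm.mul_apply, ← pow_succ']
  have hlast : ((swap a b * w) ^ m) a = b := by
    obtain ⟨m', rfl⟩ : ∃ m', m = m' + 1 := ⟨m - 1, (Nat.succ_pred_eq_of_pos hm0).symm⟩
    rw [pow_succ', Perm.mul_apply, key m' (Nat.lt_succ_self m'), Perm.mul_apply,
      ← Perm.mul_apply w, ← pow_succ', hma, swap_apply_left]
  exact ⟨(m : ℤ), by rw [zpow_natCast, hlast]⟩

/-- Multiplying by a swap of two elements in the same cycle splits them apart. -/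
lemma not_sameCycle_swap_mul_of_sameCycle (hab : a ≠ b) (h : w.SameCycle a b) :
    ¬ (swap a b * w).SameCycle a b := by
  obtain ⟨p, hp0, hpa, hpmin⟩ := exists_minimal_period (w := w) a
  obtain ⟨n₀, hn₀⟩ := sameCycle_iff_exists_pow.mp h
  have hjex : ∃ n : ℕ, 0 < n ∧ (w ^ n) a = b := by
    refine ⟨n₀ % p, ?_, by rw [← pow_mod hpa, hn₀]⟩
    rcases Nat.eq_zero_or_pos (n₀ % p) with h1 | h1
    · exfalso
      rw [pow_mod hpa, h1, pow_zero, Perm.one_apply] at hn₀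
      exact hab hn₀
    · exact h1
  obtain ⟨j, hj0, hja, hjmin⟩ := exists_minimal_hit hjex
  have hjp : j < p := by
    rcases Nat.lt_or_ge j p with h1 | h1
    · exact h1
    · exfalso
      have h3 : (w ^ (j % p)) a = b := by rw [← pow_mod hpa, hja]
      have h4 : 0 < j % p := by
        rcases Nat.eq_zero_or_pos (j % p) with hh | hh
        · rw [hh, pow_zero, Perm.one_apply] at h3; exact absurd h3 hab
        · exact hh
      exact hjmin _ h4 (Nat.lt_of_lt_of_le (Nat.mod_lt _ hp0) h1) h3
  have key : ∀ k, k < j → ((swap a b * w) ^ k) a = (w ^ k) a := by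
    intro k hk
    induction k with
    | zero => simp
    | succ k ih =>
      have hk' : k < j := Nat.lt_of_succ_lt hk
      rw [pow_succ', Perm.mul_apply, ih hk', Perm.mul_apply]
      have h1 : (w ^ (k+1)) a ≠ a := by
        intro hfix
        have h6 : p ≤ k + 1 := by
          by_contra hlt
          exact hpmin (k+1) (Nat.succ_pos k) (Nat.lt_of_not_le hlt) hfix
        omega
      have h2 : (w ^ (k+1)) a ≠ b := hjmin _ (Nat.succ_pos k) hk
      rw [pow_succ', Perm.mul_apply] at h1 h2
      rw [swap_apply_of_ne_of_ne h1 h2, ← Perm.mul_apply, ← pow_succ']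
  have hjfix : ((swap a b * w) ^ j) a = a := by
    obtain ⟨j', rfl⟩ : ∃ j', j = j' + 1 := ⟨j - 1, (Nat.succ_pred_eq_of_pos hj0).symm⟩
    rw [pow_succ', Perm.mul_apply, key j' (Nat.lt_succ_self j'), Perm.mul_apply,
      ← Perm.mul_apply w, ← pow_succ', hja, swap_apply_right]
  intro hcon
  obtain ⟨n, hn⟩ := sameCycle_iff_exists_pow.mp hcon
  rw [pow_mod hjfix] at hn
  have hlt : n % j < j := Nat.mod_lt _ hj0
  rw [key _ hlt] at hn
  rcases Nat.eq_zero_or_pos (n % j) with h1 | h1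
  · rw [h1, pow_zero, Perm.one_apply] at hn; exact hab hn
  · exact hjmin _ h1 hlt hn

end MergeSplit


section Mrg

variable (s : Setoid D) (a b : D)

/-- The join of an equivalence relation with the identification of `a` and `b`. -/
def mrgRel : D → D → Prop :=
  fun x y => s.r x y ∨ (s.r x a ∧ s.r b y) ∨ (s.r x b ∧ s.r a y)

lemma mrg_equivalence : Equivalence (mrgRel s a b) := by
  obtain ⟨hr, hs, ht⟩ := s.iseqv
  constructor
  · intro x; exact Or.inl (hr x)
  · rintro x y (h | ⟨h1, h2⟩ | ⟨h1, h2⟩)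
    · exact Or.inl (hs h)
    · exact Or.inr (Or.inr ⟨hs h2, hs h1⟩)
    · exact Or.inr (Or.inl ⟨hs h2, hs h1⟩)
  · rintro x y z (h | ⟨h1, h2⟩ | ⟨h1, h2⟩) (g | ⟨g1, g2⟩ | ⟨g1, g2⟩)
    · exact Or.inl (ht h g)
    · exact Or.inr (Or.inl ⟨ht h g1, g2⟩)
    · exact Or.inr (Or.inr ⟨ht h g1, g2⟩)
    · exact Or.inr (Or.inl ⟨h1, ht h2 g⟩)
    · exact Or.inl (ht h1 (ht (hs (ht h2 g1)) g2))
    · exact Or.inl (ht h1 g2)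
    · exact Or.inr (Or.inr ⟨h1, ht h2 g⟩)
    · exact Or.inl (ht h1 g2)
    · exact Or.inl (ht h1 (ht (hs (ht h2 g1)) g2))

/-- The merged setoid. -/
def mrg : Setoid D := ⟨mrgRel s a b, mrg_equivalence s a b⟩

lemma mrgRel_eq_of_rel (h : s.r a b) : mrgRel s a b = s.r := by
  obtain ⟨hr, hs, ht⟩ := s.iseqv
  funext x y
  apply propext
  constructor
  · rintro (g | ⟨g1, g2⟩ | ⟨g1, g2⟩)
    · exact g
    · exact ht g1 (ht h g2)
    · exact ht g1 (ht (hs h) g2)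
  · exact Or.inl

lemma card_quot_mrg_add_one (h : ¬ s.r a b) :
    Nat.card (Quotient (mrg s a b)) + 1 = Nat.card (Quotient s) := by
  classical
  have hr : ∀ x, s.r x x := s.iseqv.refl
  have hs : ∀ {x y}, s.r x y → s.r y x := fun h => s.iseqv.symm h
  have ht : ∀ {x y z}, s.r x y → s.r y z → s.r x z := fun h g => s.iseqv.trans h g
  have hne : (Quotient.mk s a) ≠ (Quotient.mk s b) := fun hh => h (Quotient.exact hh)
  have hresp : ∀ x y, mrgRel s a b x y →
      (if hx : s.r x b then (⟨Quotient.mk s a, hne⟩ : {q : Quotient s // q ≠ Quotient.mk s b})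
       else ⟨Quotient.mk s x, fun hh => hx (Quotient.exact hh)⟩) =
      (if hy : s.r y b then ⟨Quotient.mk s a, hne⟩
       else ⟨Quotient.mk s y, fun hh => hy (Quotient.exact hh)⟩) := by
    rintro x y (g | ⟨g1, g2⟩ | ⟨g1, g2⟩)
    · by_cases hx : s.r x b
      · rw [dif_pos hx, dif_pos (ht (hs g) hx)]
      · rw [dif_neg hx, dif_neg (fun hh => hx (ht g hh))]
        exact Subtype.ext (Quotient.sound g)
    · have hx : ¬ s.r x b := fun hh => h (ht (hs g1) hh)
      rw [dif_neg hx, dif_pos (hs g2)]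
      exact Subtype.ext (Quotient.sound g1)
    · have hy : ¬ s.r y b := fun hh => h (ht g2 hh)
      rw [dif_pos g1, dif_neg hy]
      exact Subtype.ext (Quotient.sound g2)
  let F : Quotient (mrg s a b) → {q : Quotient s // q ≠ Quotient.mk s b} :=
    Quotient.lift _ hresp
  let G : {q : Quotient s // q ≠ Quotient.mk s b} → Quotient (mrg s a b) :=
    fun q => Quotient.lift (fun x => Quotient.mk (mrg s a b) x)
      (fun x y hxy => Quotient.sound (Or.inl hxy)) q.1
  have hFG : Function.RightInverse G F := by
    rintro ⟨q, hq⟩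
    obtain ⟨x, rfl⟩ := Quotient.exists_rep q
    have hx : ¬ s.r x b := fun hh => hq (Quotient.sound hh)
    show F (Quotient.mk _ x) = _
    show (if hx : s.r x b then _ else _) = _
    rw [dif_neg hx]
  have hGF : Function.LeftInverse G F := by
    rintro ⟨x⟩
    show G (if hsx : s.r x b then _ else _) = _
    by_cases hx : s.r x b
    · rw [dif_pos hx]
      show Quotient.mk _ a = Quotient.mk _ x
      exact Quotient.sound (Or.inr (Or.inl ⟨hr a, hs hx⟩))
    · rw [dif_neg hx]
      rfl
  have hbij : Function.Bijective F := ⟨hGF.injective, hFG.surjective⟩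
  rw [Nat.card_eq_of_bijective F hbij]
  haveI : Fintype (Quotient s) := Fintype.ofFinite _
  rw [Nat.card_eq_fintype_card, Nat.card_eq_fintype_card]
  have h2 : Fintype.card {q : Quotient s // q ≠ Quotient.mk s b}
      = Fintype.card (Quotient s) - 1 := by
    rw [← Fintype.card_subtype_eq (Quotient.mk s b)]
    exact Fintype.card_subtype_compl _
  rw [h2]
  haveI : Nonempty (Quotient s) := ⟨Quotient.mk s a⟩
  have h3 : 1 ≤ Fintype.card (Quotient s) := Fintype.card_pos
  omega

end Mrg

section CC

variable {w : Perm D} {a b : D}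

lemma mrg_cyc_always (w : Perm D) (a b : D) : mrgRel (cyc w) a b a b :=
  Or.inr (Or.inl ⟨Equiv.Perm.SameCycle.refl _ _, Equiv.Perm.SameCycle.refl _ _⟩)

/-- One inclusion of invariance of the join under swap-multiplication. -/
lemma sameCycle_le_mrg_swap (hxy : w.SameCycle x y) :
    mrgRel (cyc (swap a b * w)) a b x y := by
  classical
  obtain ⟨n, rfl⟩ := sameCycle_iff_exists_pow.mp hxy
  clear hxy
  induction n with
  | zero => exact Or.inl (by simpa using Equiv.Perm.SameCycle.refl _ _)
  | succ n ih =>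
    have step : mrgRel (cyc (swap a b * w)) a b ((w ^ n) x) ((w ^ (n+1)) x) := by
      set z := (w ^ n) x with hz
      have h1 : (w ^ (n+1)) x = w z := by rw [pow_succ', Perm.mul_apply]
      rw [h1]
      by_cases hwa : w z = a
      · -- (swap a b * w) z = b
        have h2 : (swap a b * w).SameCycle z b := ⟨1, by simp [hwa]⟩
        rw [hwa]
        exact Or.inr (Or.inr ⟨h2, Equiv.Perm.SameCycle.refl _ _⟩)
      · by_cases hwb : w z = b
        · have h2 : (swap a b * w).SameCycle z a := ⟨1, by simp [hwb]⟩
          rw [hwb]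
          exact Or.inr (Or.inl ⟨h2, Equiv.Perm.SameCycle.refl _ _⟩)
        · have h2 : (swap a b * w).SameCycle z (w z) :=
            ⟨1, by simp [swap_apply_of_ne_of_ne hwa hwb]⟩
          exact Or.inl h2
    exact (mrg_equivalence (cyc (swap a b * w)) a b).trans ih step

lemma mrg_swap_le : ∀ x y, mrgRel (cyc w) a b x y → mrgRel (cyc (swap a b * w)) a b x y := by
  have E := mrg_equivalence (cyc (swap a b * w)) a b
  rintro x y (g | ⟨g1, g2⟩ | ⟨g1, g2⟩)
  · exact sameCycle_le_mrg_swap g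
  · exact E.trans (sameCycle_le_mrg_swap g1)
      (E.trans (mrg_cyc_always _ a b) (sameCycle_le_mrg_swap g2))
  · exact E.trans (sameCycle_le_mrg_swap g1)
      (E.trans (E.symm (mrg_cyc_always _ a b)) (sameCycle_le_mrg_swap g2))

lemma mrg_swap_eq (w : Perm D) (a b : D) :
    mrgRel (cyc (swap a b * w)) a b = mrgRel (cyc w) a b := by
  funext x y
  apply propext
  constructor
  · intro h
    have h2 := mrg_swap_le (w := swap a b * w) (a := a) (b := b) x y h
    rwa [← mul_assoc, swap_mul_self, one_mul] at h2
  · exact mrg_swap_le x y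

lemma cc_swap_mul_add_one_of_not (hab : a ≠ b) (h : ¬ w.SameCycle a b) :
    cc (swap a b * w) + 1 = cc w := by
  unfold cc
  have h4 : (swap a b * w).SameCycle a b := sameCycle_swap_mul_of_not hab h
  have h5 : mrgRel (cyc (swap a b * w)) a b = (cyc (swap a b * w)).r :=
    mrgRel_eq_of_rel _ _ _ h4
  have h6 : Quotient (mrg (cyc (swap a b * w)) a b) = Quotient (cyc (swap a b * w)) := by
    congr 1
    exact Setoid.ext fun x y => by rw [show (mrg (cyc (swap a b * w)) a b).r = _ from h5]
  have h7 := card_quot_mrg_add_one (cyc w) a b h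
  have h8 : mrg (cyc (swap a b * w)) a b = mrg (cyc w) a b := by
    apply Setoid.ext
    intro x y
    rw [show (mrg (cyc (swap a b * w)) a b).r = _ from mrg_swap_eq w a b]
    rfl
  rw [← h7]
  congr 1
  rw [← h8, h6]

lemma cc_swap_mul_of_sameCycle (hab : a ≠ b) (h : w.SameCycle a b) :
    cc (swap a b * w) = cc w + 1 := by
  have h1 : ¬ (swap a b * w).SameCycle a b := not_sameCycle_swap_mul_of_sameCycle hab h
  have h2 := cc_swap_mul_add_one_of_not hab h1
  rw [← mul_assoc, swap_mul_self, one_mul] at h2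
  exact h2.symm

lemma cc_le_card (f : Perm D) : cc f ≤ Fintype.card D := by
  rw [cc, ← Nat.card_eq_fintype_card]
  exact Nat.card_le_card_of_surjective _ (Quotient.exists_rep)

lemma cc_one : cc (1 : Perm D) = Fintype.card D := by
  rw [cc, ← Nat.card_eq_fintype_card]
  apply Nat.card_eq_of_bijective
    (Quotient.lift (id : D → D) fun x y h => Equiv.Perm.sameCycle_one.mp h)
  constructor
  · rintro ⟨x⟩ ⟨y⟩ (hxy : x = y)
    exact Quotient.sound (Equiv.Perm.sameCycle_one.mpr hxy)
  · exact fun x => ⟨Quotient.mk _ x, rfl⟩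

lemma eq_one_of_cc_eq_card {f : Perm D} (h : cc f = Fintype.card D) : f = 1 := by
  classical
  have hsurj : Function.Surjective (Quotient.mk (cyc f)) := Quotient.exists_rep
  haveI : Fintype (Quotient (cyc f)) := Fintype.ofFinite _
  have hcard : Fintype.card (Quotient (cyc f)) = Fintype.card D := by
    rw [← Nat.card_eq_fintype_card]; exact h
  have hinj : Function.Injective (Quotient.mk (cyc f)) := by
    have := (Fintype.bijective_iff_surjective_and_card (Quotient.mk (cyc f))).mpr
      ⟨hsurj, (hcard.symm)⟩
    exact this.injective
  ext x
  have : Quotient.mk (cyc f) x = Quotient.mk (cyc f) (f x) :=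
    Quotient.sound (⟨1, by simp⟩ : (cyc f).r x (f x))
  rw [Perm.one_apply]
  exact (hinj this).symm

end CC

section Conn


lemma conn_iff {p q : D} : (connSetoid x y).r p q ↔ Relation.EqvGen (stepRel x y) p q :=
  Iff.rfl

lemma conn_step_left (p : D) : (connSetoid x y).r p (x p) :=
  Relation.EqvGen.rel _ _ (Or.inl rfl)

lemma conn_step_right (p : D) : (connSetoid x y).r p (y p) :=
  Relation.EqvGen.rel _ _ (Or.inr rfl)

lemma conn_equivalence (x y : Perm D) : Equivalence ((connSetoid x y).r) :=
  Relation.EqvGen.is_equivalence _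

lemma conn_of_sameCycle_left {p q : D} (h : x.SameCycle p q) : (connSetoid x y).r p q := by
  obtain ⟨n, rfl⟩ := sameCycle_iff_exists_pow.mp h
  clear h
  induction n with
  | zero =>
    have h0 : (x ^ 0) p = p := by simp
    rw [h0]
  | succ n ih =>
    have h0 : (x ^ (n+1)) p = x ((x ^ n) p) := by rw [pow_succ', Perm.mul_apply]
    rw [h0]
    exact (conn_equivalence x y).trans ih (conn_step_left _)

lemma conn_of_sameCycle_right {p q : D} (h : y.SameCycle p q) : (connSetoid x y).r p q := by
  obtain ⟨n, rfl⟩ := sameCycle_iff_exists_pow.mp h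
  clear h
  induction n with
  | zero =>
    have h0 : (y ^ 0) p = p := by simp
    rw [h0]
  | succ n ih =>
    have h0 : (y ^ (n+1)) p = y ((y ^ n) p) := by rw [pow_succ', Perm.mul_apply]
    rw [h0]
    exact (conn_equivalence x y).trans ih (conn_step_right _)

lemma conn_of_sameCycle_mul {p q : D} (h : (x*y).SameCycle p q) : (connSetoid x y).r p q := by
  obtain ⟨n, rfl⟩ := sameCycle_iff_exists_pow.mp h
  clear h
  induction n with
  | zero =>
    have h0 : ((x*y) ^ 0) p = p := by simp
    rw [h0]
  | succ n ih =>
    have h2 : ((x*y) ^ (n+1)) p = x (y (((x*y) ^ n) p)) := by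
      rw [pow_succ', Perm.mul_apply, Perm.mul_apply]
    rw [h2]
    exact (conn_equivalence x y).trans ih
      ((conn_equivalence x y).trans (conn_step_right _) (conn_step_left _))

lemma card_quot_le_of_le {s t : Setoid D} (h : ∀ p q, s.r p q → t.r p q) :
    Nat.card (Quotient t) ≤ Nat.card (Quotient s) :=
  Nat.card_le_card_of_surjective
    (Quotient.lift (Quotient.mk t) (fun p q hpq => Quotient.sound (h p q hpq)))
    (fun qt => by obtain ⟨z, rfl⟩ := Quotient.exists_rep qt; exact ⟨Quotient.mk _ z, rfl⟩)

lemma card_quot_eq_of_iff {s t : Setoid D} (h : ∀ p q, s.r p q ↔ t.r p q) :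
    Nat.card (Quotient s) = Nat.card (Quotient t) := by
  have : s = t := Setoid.ext h
  rw [this]

lemma kc_one_left (y : Perm D) : kc 1 y = cc y := by
  apply card_quot_eq_of_iff
  intro p q
  constructor
  · intro h
    have h' : Relation.EqvGen (stepRel 1 y) p q := h
    clear h
    induction h' with
    | rel p q hpq =>
      rcases hpq with h | h
      · rw [h, Perm.one_apply]
      · rw [h]
        exact (⟨1, by simp⟩ : y.SameCycle p (y p))
    | refl p => exact Equiv.Perm.SameCycle.refl _ _
    | symm p q _ ih => exact ih.symm
    | trans p q r _ _ ih1 ih2 => exact ih1.trans ih2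
  · intro h
    exact conn_of_sameCycle_right h

variable {a b : D}

lemma conn_swap_le (hb : b = x a) :
    ∀ p q, (connSetoid (swap a b * x) y).r p q → (connSetoid x y).r p q := by
  have E := conn_equivalence x y
  intro p q h
  have h' : Relation.EqvGen (stepRel (swap a b * x) y) p q := h
  clear h
  induction h' with
  | rel p q hpq =>
    rcases hpq with h | h
    · rw [h, Perm.mul_apply]
      by_cases h1 : x p = a
      · have hpa : (connSetoid x y).r p (x p) := conn_step_left p
        rw [h1] at hpa
        rw [h1, swap_apply_left, hb]
        exact E.trans hpa (conn_step_left a)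
      · by_cases h2 : x p = b
        · have hpb : (connSetoid x y).r p (x p) := conn_step_left p
          rw [h2] at hpb
          rw [h2, swap_apply_right]
          have hab2 : (connSetoid x y).r a b := by rw [hb]; exact conn_step_left a
          exact E.trans hpb (E.symm hab2)
        · rw [swap_apply_of_ne_of_ne h1 h2]
          exact conn_step_left p
    · rw [h]; exact conn_step_right p
  | refl p => exact E.refl p
  | symm p q _ ih => exact E.symm ih
  | trans p q r _ _ ih1 ih2 => exact E.trans ih1 ih2

lemma conn_le_of_conn_ab (hb : b = x a)
    (hab : (connSetoid (swap a b * x) y).r a b) :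
    ∀ p q, (connSetoid x y).r p q → (connSetoid (swap a b * x) y).r p q := by
  have E := conn_equivalence (swap a b * x) y
  intro p q h
  have h' : Relation.EqvGen (stepRel x y) p q := h
  clear h
  induction h' with
  | rel p q hpq =>
    rcases hpq with h | h
    · rw [h]
      by_cases h1 : x p = a
      · have hh : (swap a b * x) p = b := by rw [Perm.mul_apply, h1, swap_apply_left]
        have hpb : (connSetoid (swap a b * x) y).r p ((swap a b * x) p) := conn_step_left p
        rw [hh] at hpb
        rw [h1]
        exact E.trans hpb (E.symm hab)
      · by_cases h2 : x p = b
        · have hh : (swap a b * x) p = a := by rw [Perm.mul_apply, h2, swap_apply_right]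
          have hpa : (connSetoid (swap a b * x) y).r p ((swap a b * x) p) := conn_step_left p
          rw [hh] at hpa
          rw [h2]
          exact E.trans hpa hab
        · have hh : (swap a b * x) p = x p := by rw [Perm.mul_apply, swap_apply_of_ne_of_ne h1 h2]
          have hpp : (connSetoid (swap a b * x) y).r p ((swap a b * x) p) := conn_step_left p
          rw [hh] at hpp
          exact hpp
    · rw [h]; exact conn_step_right p
  | refl p => exact E.refl p
  | symm p q _ ih => exact E.symm ih
  | trans p q r _ _ ih1 ih2 => exact E.trans ih1 ih2

lemma conn_le_mrg (hb : b = x a) :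
    ∀ p q, (connSetoid x y).r p q → mrgRel (connSetoid (swap a b * x) y) a b p q := by
  have E := mrg_equivalence (connSetoid (swap a b * x) y) a b
  have E0 := conn_equivalence (swap a b * x) y
  intro p q h
  have h' : Relation.EqvGen (stepRel x y) p q := h
  clear h
  induction h' with
  | rel p q hpq =>
    rcases hpq with h | h
    · rw [h]
      by_cases h1 : x p = a
      · have hh : (swap a b * x) p = b := by rw [Perm.mul_apply, h1, swap_apply_left]
        have hpb : (connSetoid (swap a b * x) y).r p ((swap a b * x) p) := conn_step_left p
        rw [hh] at hpb
        rw [h1]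
        exact Or.inr (Or.inr ⟨hpb, E0.refl a⟩)
      · by_cases h2 : x p = b
        · have hh : (swap a b * x) p = a := by rw [Perm.mul_apply, h2, swap_apply_right]
          have hpa : (connSetoid (swap a b * x) y).r p ((swap a b * x) p) := conn_step_left p
          rw [hh] at hpa
          rw [h2]
          exact Or.inr (Or.inl ⟨hpa, E0.refl b⟩)
        · have hh : (swap a b * x) p = x p := by rw [Perm.mul_apply, swap_apply_of_ne_of_ne h1 h2]
          have hpp : (connSetoid (swap a b * x) y).r p ((swap a b * x) p) := conn_step_left p
          rw [hh] at hpp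
          exact Or.inl hpp
    · rw [h]; exact Or.inl (conn_step_right p)
  | refl p => exact E.refl p
  | symm p q _ ih => exact E.symm ih
  | trans p q r _ _ ih1 ih2 => exact E.trans ih1 ih2

end Conn

/-- The Euler inequality for a pair of permutations (hypermap genus inequality). -/
theorem euler_ineq (x y : Perm D) :
    cc x + cc y + cc (x * y) ≤ Fintype.card D + 2 * kc x y := by
  classical
  suffices H : ∀ n (x : Perm D), Fintype.card D - cc x ≤ n →
      cc x + cc y + cc (x * y) ≤ Fintype.card D + 2 * kc x y from H _ x le_rfl
  intro n
  induction n with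
  | zero =>
    intro x hn
    have h1 : cc x = Fintype.card D := le_antisymm (cc_le_card x) (by omega)
    have h2 : x = 1 := eq_one_of_cc_eq_card h1
    subst h2
    rw [one_mul, cc_one, kc_one_left]
    omega
  | succ n ih =>
    intro x hn
    by_cases hx1 : x = 1
    · subst hx1
      rw [one_mul, cc_one, kc_one_left]
      omega
    · obtain ⟨a, hxa⟩ : ∃ a, x a ≠ a := by
        by_contra hc
        push_neg at hc
        exact hx1 (Equiv.ext hc)
      set b := x a with hb
      have hab : a ≠ b := fun h => hxa h.symm
      have hsc : x.SameCycle a b := ⟨1, by simp [hb]⟩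
      set x' := swap a b * x with hx'
      have hccx' : cc x' = cc x + 1 := cc_swap_mul_of_sameCycle hab hsc
      have hxx : x = swap a b * x' := by rw [hx', ← mul_assoc, swap_mul_self, one_mul]
      have hxy' : x * y = swap a b * (x' * y) := by rw [hxx, mul_assoc]
      have hccx : cc x ≤ Fintype.card D := cc_le_card x
      have hccx'le : cc x' ≤ Fintype.card D := cc_le_card x'
      have hmeas : Fintype.card D - cc x' ≤ n := by omega
      have IH := ih x' hmeas
      by_cases hconn : (connSetoid x' y).r a b
      · -- the two generated groups have the same orbits
        have hkc : kc x y = kc x' y := by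
          apply card_quot_eq_of_iff
          intro p q
          constructor
          · exact conn_le_of_conn_ab hb.symm hconn p q
          · exact conn_swap_le hb.symm p q
        have hcxy : cc (x * y) ≤ cc (x' * y) + 1 := by
          rw [hxy']
          by_cases hsc2 : (x' * y).SameCycle a b
          · rw [cc_swap_mul_of_sameCycle hab hsc2]
          · have := cc_swap_mul_add_one_of_not hab hsc2
            omega
        omega
      · have hnsc : ¬ (x' * y).SameCycle a b := fun hh => hconn (conn_of_sameCycle_mul hh)
        have hcxy : cc (x * y) + 1 = cc (x' * y) := by
          rw [hxy']
          exact cc_swap_mul_add_one_of_not hab hnsc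
        have hkc : kc x' y ≤ kc x y + 1 := by
          have h1 := card_quot_mrg_add_one (connSetoid x' y) a b hconn
          have h2 : Nat.card (Quotient (mrg (connSetoid x' y) a b)) ≤ kc x y :=
            card_quot_le_of_le (conn_le_mrg hb.symm)
          unfold kc at *
          omega
        omega

end Surg



open SimpleGraph

variable {V : Type} [Fintype V] [DecidableEq V]

/-- `S` is a (vertex) cut of `G`: deleting `S` leaves a disconnected graph. -/
def IsCut (G : SimpleGraph V) (S : Set V) : Prop :=
  ¬ (G.induce Sᶜ).Preconnected

/-- `S` is a minimal cut of `G`: it is a cut, and deleting any proper subset of `S`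
leaves a connected graph. -/
def IsMinimalCut (G : SimpleGraph V) (S : Set V) : Prop :=
  IsCut G S ∧ ∀ T : Set V, T ⊂ S → (G.induce Tᶜ).Connected

/-- `G` is cleavable if every minimal cut of `G` induces a connected subgraph. -/
def Cleavable (G : SimpleGraph V) : Prop :=
  ∀ S : Set V, IsMinimalCut G S → (G.induce S).Connected

/-- `G` is `k`-connected: it has more than `k` vertices and removing fewer
than `k` vertices leaves a connected graph. -/
def IsKConnected (k : ℕ) (G : SimpleGraph V) : Prop :=
  k < Nat.card V ∧ ∀ S : Set V, S.ncard < k → (G.induce Sᶜ).Connected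

/-- The dart-reversal permutation of the darts of `G`. -/
def dartFlip (G : SimpleGraph V) : Equiv.Perm G.Dart :=
  Function.Involutive.toPerm _ (SimpleGraph.Dart.symm_involutive (G := G))

/-- A rotation system (combinatorial embedding) of a graph `G`: a permutation of the
darts of `G` whose cycles are precisely the sets of darts leaving each vertex. -/
structure RotationSystem (G : SimpleGraph V) where
  rot : Equiv.Perm G.Dart
  rot_fst : ∀ d : G.Dart, (rot d).fst = d.fst
  rot_cyclic : ∀ d e : G.Dart, d.fst = e.fst → rot.SameCycle d e

namespace RotationSystem

variable {G : SimpleGraph V} (P : RotationSystem G)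

/-- The face-tracing permutation of a rotation system. -/
def facePerm : Equiv.Perm G.Dart := (dartFlip G).trans P.rot

/-- Two darts lie on the boundary of a common face. -/
def faceSetoid : Setoid G.Dart :=
  ⟨P.facePerm.SameCycle,
   ⟨fun _ => Equiv.Perm.SameCycle.refl _ _, fun h => h.symm, fun h h' => h.trans h'⟩⟩

/-- The faces of the embedding: orbits of the face-tracing permutation. -/
abbrev Face := Quotient P.faceSetoid

/-- The number of faces of the embedding. -/
noncomputable def numFaces : ℕ := Nat.card P.Face

/-- The set of vertices on the boundary of the face `F`. -/
def faceVerts (F : P.Face) : Set V :=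
  {v | ∃ d : G.Dart, Quotient.mk P.faceSetoid d = F ∧ d.fst = v}

/-- The length of (the closed boundary walk of) the face `F`. -/
noncomputable def faceLength (F : P.Face) : ℕ :=
  Nat.card {d : G.Dart // Quotient.mk P.faceSetoid d = F}

/-- A large face is a face of length at least 4. -/
def IsLargeFace (F : P.Face) : Prop := 4 ≤ P.faceLength F

/-- The edge `ab` lies on the boundary of the face `F`. -/
def EdgeOnFace (F : P.Face) (a b : V) : Prop :=
  ∃ d : G.Dart, Quotient.mk P.faceSetoid d = F ∧
    ((d.fst = a ∧ d.snd = b) ∨ (d.fst = b ∧ d.snd = a))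

end RotationSystem

/-- A plane embedding of `G`: a rotation system on a connected graph satisfying
Euler's formula `|V| - |E| + |F| = 2`. -/
structure PlaneEmbedding (G : SimpleGraph V) where
  rs : RotationSystem G
  connected : G.Connected
  euler : Nat.card V + rs.numFaces = Nat.card G.edgeSet + 2

/-- The large faces of a rotation system. -/
def RotationSystem.LargeFace {G : SimpleGraph V} (P : RotationSystem G) :=
  {F : P.Face // P.IsLargeFace F}

section Bridge

open SimpleGraph Surg Equiv

variable {G : SimpleGraph V}

instance dartFinite : Finite G.Dart :=
  Finite.of_injective (fun d => d.toProd) (fun d e h => SimpleGraph.Dart.ext d e h)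

lemma dart_ext' (d e : G.Dart) (h1 : d.fst = e.fst) (h2 : d.snd = e.snd) : d = e :=
  SimpleGraph.Dart.ext d e (Prod.ext h1 h2)

lemma dartFlip_apply (d : G.Dart) : dartFlip G d = d.symm := rfl

lemma dartFlip_ne (d : G.Dart) : dartFlip G d ≠ d := by
  intro h
  have h2 : d.toProd.2 = d.toProd.1 := congrArg (fun x => x.toProd.1) h
  exact G.irrefl (h2 ▸ d.adj)

lemma facePerm_eq_mul (P : RotationSystem G) : P.facePerm = P.rot * dartFlip G := rfl

/-- Any vertex of a connected graph on more than one vertex has a dart. -/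
lemma exists_dart (hG : G.Connected) (hcard : 1 < Fintype.card V) (v : V) :
    ∃ d : G.Dart, d.fst = v := by
  obtain ⟨w, hw⟩ := Fintype.exists_ne_of_one_lt_card hcard v
  obtain ⟨p⟩ := hG.preconnected v w
  cases p with
  | nil => exact absurd rfl hw
  | cons h q => exact ⟨⟨(_, _), h⟩, rfl⟩

lemma sameCycle_rot_fst (P : RotationSystem G) {d e : G.Dart}
    (h : P.rot.SameCycle d e) : d.fst = e.fst := by
  classical
  letI : DecidableRel G.Adj := Classical.decRel _
  obtain ⟨n, rfl⟩ := Surg.sameCycle_iff_exists_pow.mp h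
  clear h
  induction n with
  | zero => simp
  | succ n ih =>
    rw [pow_succ', Perm.mul_apply, P.rot_fst]
    exact ih

lemma cc_rot_eq (P : RotationSystem G) (hG : G.Connected) (hcard : 1 < Fintype.card V) :
    Surg.cc P.rot = Nat.card V := by
  apply Nat.card_eq_of_bijective
    (Quotient.lift (fun d : G.Dart => d.fst) (fun d e h => sameCycle_rot_fst P h))
  constructor
  · rintro ⟨d⟩ ⟨e⟩ (h : d.fst = e.fst)
    exact Quotient.sound (P.rot_cyclic d e h)
  · intro v
    obtain ⟨d, hd⟩ := exists_dart hG hcard v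
    exact ⟨Quotient.mk _ d, hd⟩

lemma flip_pow (n : ℕ) (d : G.Dart) :
    ((dartFlip G) ^ n) d = d ∨ ((dartFlip G) ^ n) d = d.symm := by
  induction n with
  | zero => left; simp
  | succ n ih =>
    rw [pow_succ', Perm.mul_apply]
    rcases ih with h | h <;> rw [h]
    · right; rfl
    · left
      show d.symm.symm = d
      exact SimpleGraph.Dart.symm_symm d

lemma cc_flip_eq (G : SimpleGraph V) : Surg.cc (dartFlip G) = Nat.card G.edgeSet := by
  have hresp : ∀ d e : G.Dart, (Surg.cyc (dartFlip G)).r d e →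
      (⟨d.edge, d.edge_mem⟩ : G.edgeSet) = ⟨e.edge, e.edge_mem⟩ := by
    intro d e h
    obtain ⟨n, rfl⟩ := Surg.sameCycle_iff_exists_pow.mp h
    rcases flip_pow n d with h2 | h2 <;> rw [h2]
    exact Subtype.ext (SimpleGraph.Dart.edge_symm d).symm
  apply Nat.card_eq_of_bijective (Quotient.lift _ hresp)
  constructor
  · rintro ⟨d⟩ ⟨e⟩ h
    have h2 : d.edge = e.edge := congrArg Subtype.val h
    rcases (SimpleGraph.dart_edge_eq_iff d e).mp h2 with h3 | h3
    · rw [h3]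
    · refine Quotient.sound (⟨1, ?_⟩ : (dartFlip G).SameCycle d e)
      rw [h3]
      show (dartFlip G) e.symm = e
      exact SimpleGraph.Dart.symm_symm e
  · rintro ⟨e, he⟩
    induction e with
    | _ a b =>
      exact ⟨Quotient.mk _ ⟨(a, b), he⟩, rfl⟩

lemma cc_face_eq (P : RotationSystem G) : Surg.cc P.facePerm = P.numFaces := by
  have h : Surg.cyc P.facePerm = P.faceSetoid := Setoid.ext fun _ _ => Iff.rfl
  rw [Surg.cc, h]
  rfl

lemma card_dart_eq (G : SimpleGraph V) : Nat.card G.Dart = 2 * Nat.card G.edgeSet := by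
  classical
  letI : DecidableRel G.Adj := Classical.decRel _
  rw [Nat.card_eq_fintype_card, Nat.card_eq_fintype_card]
  rw [G.dart_card_eq_twice_card_edges, SimpleGraph.edgeFinset_card]

/-- In a 3-connected graph every vertex has at least three darts. -/
lemma exists_three_darts (h3 : IsKConnected 3 G) (hG : G.Connected) (u : V) :
    ∃ d₁ d₂ d₃ : G.Dart, d₁.fst = u ∧ d₂.fst = u ∧ d₃.fst = u ∧
      d₁ ≠ d₂ ∧ d₁ ≠ d₃ ∧ d₂ ≠ d₃ := by
  classical
  have hcV : 3 < Nat.card V := h3.1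
  have hN : 3 ≤ (G.neighborSet u).ncard := by
    by_contra hlt
    push_neg at hlt
    have hconn := h3.2 _ hlt
    have hu : u ∈ (G.neighborSet u)ᶜ := fun h => G.irrefl h
    have hw : ∃ w, w ∈ (G.neighborSet u)ᶜ ∧ w ≠ u := by
      by_contra hc
      push_neg at hc
      have hsub : (Set.univ : Set V) ⊆ insert u (G.neighborSet u) := by
        intro w _
        by_cases h1 : w ∈ G.neighborSet u
        · exact Set.mem_insert_of_mem _ h1
        · exact (hc w h1) ▸ Set.mem_insert _ _
      have h4 : (Set.univ : Set V).ncard ≤ (insert u (G.neighborSet u)).ncard :=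
        Set.ncard_le_ncard hsub (Set.toFinite _)
      rw [Set.ncard_univ] at h4
      have h5 := Set.ncard_insert_le u (G.neighborSet u)
      omega
    obtain ⟨w, hw1, hw2⟩ := hw
    obtain ⟨p⟩ := hconn.preconnected ⟨u, hu⟩ ⟨w, hw1⟩
    cases p with
    | nil => exact hw2 rfl
    | cons h q =>
      rename_i c
      have hadj : G.Adj u c.val := h
      exact c.prop hadj
  obtain ⟨t, hts, htc⟩ := Set.exists_subset_card_eq hN
  obtain ⟨x1, x2, x3, h12, h13, h23, rfl⟩ := Set.ncard_eq_three.mp htc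
  have hx1 : G.Adj u x1 := hts (by simp)
  have hx2 : G.Adj u x2 := hts (by simp)
  have hx3 : G.Adj u x3 := hts (by simp)
  refine ⟨⟨(u, x1), hx1⟩, ⟨(u, x2), hx2⟩, ⟨(u, x3), hx3⟩, rfl, rfl, rfl, ?_, ?_, ?_⟩ <;>
    · intro h
      first
        | exact h12 (congrArg (fun d => d.snd) h)
        | exact h13 (congrArg (fun d => d.snd) h)
        | exact h23 (congrArg (fun d => d.snd) h)

lemma rot_sq_ne (P : RotationSystem G) (h3 : IsKConnected 3 G) (hG : G.Connected)
    (d : G.Dart) : (P.rot ^ 2) d ≠ d := by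
  intro h2
  obtain ⟨d₁, d₂, d₃, hf1, hf2, hf3, h12, h13, h23⟩ := exists_three_darts h3 hG d.fst
  have c1 := Surg.sameCycle_of_sq_fixed h2 (P.rot_cyclic d d₁ hf1.symm)
  have c2 := Surg.sameCycle_of_sq_fixed h2 (P.rot_cyclic d d₂ hf2.symm)
  have c3 := Surg.sameCycle_of_sq_fixed h2 (P.rot_cyclic d d₃ hf3.symm)
  rcases c1 with c1 | c1 <;> rcases c2 with c2 | c2 <;> rcases c3 with c3 | c3 <;> simp_all

lemma rot_ne_fixed (P : RotationSystem G) (h3 : IsKConnected 3 G) (hG : G.Connected)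
    (d : G.Dart) : P.rot d ≠ d := by
  intro h
  apply rot_sq_ne P h3 hG d
  rw [pow_two, Perm.mul_apply, h, h]

lemma swap_fst_preserve {d₁ d₂ : G.Dart} (h : d₁.fst = d₂.fst) (z : G.Dart) :
    (Equiv.swap d₁ d₂ z).fst = z.fst := by
  classical
  by_cases h1 : z = d₁
  · rw [h1, Equiv.swap_apply_left, ← h]
  · by_cases h2 : z = d₂
    · rw [h2, Equiv.swap_apply_right, h]
    · rw [Equiv.swap_apply_of_ne_of_ne h1 h2]

lemma sameCycle_fst_preserve {f : Equiv.Perm G.Dart} (hf : ∀ z, (f z).fst = z.fst)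
    {d e : G.Dart} (h : f.SameCycle d e) : d.fst = e.fst := by
  obtain ⟨n, rfl⟩ := Surg.sameCycle_iff_exists_pow.mp h
  clear h
  induction n with
  | zero => simp
  | succ n ih =>
    rw [pow_succ', Perm.mul_apply, hf]
    exact ih

/-- Forced-bad configuration at `u` towards `v`. -/
def FB (P : RotationSystem G) (F₁ F₂ : P.Face) (u v : V) : Prop :=
  ∃ d : G.Dart, d.fst = u ∧ d.snd = v ∧
    (({e : G.Dart | e.fst = u ∧ Quotient.mk P.faceSetoid e = F₁} = {d} ∧
      {e : G.Dart | e.fst = u ∧ Quotient.mk P.faceSetoid e = F₂} = {P.rot d}) ∨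
     ({e : G.Dart | e.fst = u ∧ Quotient.mk P.faceSetoid e = F₂} = {d} ∧
      {e : G.Dart | e.fst = u ∧ Quotient.mk P.faceSetoid e = F₁} = {P.rot d}))

lemma surgery (P : PlaneEmbedding G) (h3 : IsKConnected 3 G) {F₁ F₂ : P.rs.Face}
    (hne : F₁ ≠ F₂) {u v : V} (huv : u ≠ v)
    (hu1 : u ∈ P.rs.faceVerts F₁) (hu2 : u ∈ P.rs.faceVerts F₂)
    (hv1 : v ∈ P.rs.faceVerts F₁) (hv2 : v ∈ P.rs.faceVerts F₂)
    (hnFB : ¬ FB P.rs F₁ F₂ u v) : False := by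
  classical
  letI : DecidableRel G.Adj := Classical.decRel _
  obtain ⟨rs, hG, heuler⟩ := P
  dsimp only at *
  set σ := rs.rot with hσdef
  set α := dartFlip G with hαdef
  set φ := rs.facePerm with hφdef
  have hcV : 1 < Fintype.card V := by
    have := h3.1
    rw [Nat.card_eq_fintype_card] at this
    omega
  -- the unique-dart primitive
  have huniq : ∀ d e : G.Dart, d.fst = e.fst → d.snd = e.snd → d = e := dart_ext'
  -- darts on the faces at u and at v
  obtain ⟨du1, hdu1F, hdu1⟩ := hu1
  obtain ⟨du2, hdu2F, hdu2⟩ := hu2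
  obtain ⟨e₁, he1F, he1⟩ := hv1
  obtain ⟨e₂, he2F, he2⟩ := hv2
  have hσfix : ∀ d : G.Dart, σ d ≠ d := rot_ne_fixed rs h3 hG
  -- choose good darts at u
  have hchoice : ∃ d₁ d₂ : G.Dart, (d₁.fst = u ∧ Quotient.mk rs.faceSetoid d₁ = F₁) ∧
      (d₂.fst = u ∧ Quotient.mk rs.faceSetoid d₂ = F₂) ∧
      ∀ d0 : G.Dart, d0.fst = u → d0.snd = v → Equiv.swap d₁ d₂ (σ d0) ≠ d0 := by
    by_contra hc
    push_neg at hc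
    obtain ⟨d0, hd0u, hd0v, hbad0⟩ := hc du1 du2 ⟨hdu1, hdu1F⟩ ⟨hdu2, hdu2F⟩
    have hswap : ∀ a b : G.Dart, Equiv.swap a b (σ d0) = d0 →
        (σ d0 = a ∧ b = d0) ∨ (σ d0 = b ∧ a = d0) := by
      intro a b hab
      by_cases h1 : σ d0 = a
      · rw [h1, Equiv.swap_apply_left] at hab
        exact Or.inl ⟨h1, hab⟩
      · by_cases h2 : σ d0 = b
        · rw [h2, Equiv.swap_apply_right] at hab
          exact Or.inr ⟨h2, hab⟩
        · rw [Equiv.swap_apply_of_ne_of_ne h1 h2] at hab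
          exact absurd hab (hσfix d0)
    -- any dart from u to v coincides with d0
    have huv_dart : ∀ d0' : G.Dart, d0'.fst = u → d0'.snd = v → d0' = d0 := by
      intro d0' h1 h2
      exact huniq d0' d0 (by rw [h1, hd0u]) (by rw [h2, hd0v])
    apply hnFB
    rcases hswap du1 du2 hbad0 with ⟨hA1, hA2⟩ | ⟨hB1, hB2⟩
    · -- σ d0 = du1 ∈ F₁ and du2 = d0 ∈ F₂ : second disjunct of FB
      refine ⟨d0, hd0u, hd0v, Or.inr ⟨?_, ?_⟩⟩
      · rw [Set.eq_singleton_iff_unique_mem]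
        refine ⟨⟨hd0u, hA2 ▸ hdu2F⟩, ?_⟩
        rintro e ⟨heu, heF⟩
        obtain ⟨d0', h1', h2', h3'⟩ := hc du1 e ⟨hdu1, hdu1F⟩ ⟨heu, heF⟩
        rw [huv_dart d0' h1' h2'] at h3'
        rcases hswap du1 e h3' with ⟨_, h5⟩ | ⟨h4, h5⟩
        · exact h5
        · exfalso
          apply hne
          rw [← hdu1F, h5, ← hA2, hdu2F]
      · rw [Set.eq_singleton_iff_unique_mem]
        refine ⟨⟨by rw [hA1]; exact hdu1, by rw [hA1]; exact hdu1F⟩, ?_⟩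
        rintro e ⟨heu, heF⟩
        obtain ⟨d0', h1', h2', h3'⟩ := hc e du2 ⟨heu, heF⟩ ⟨hdu2, hdu2F⟩
        rw [huv_dart d0' h1' h2'] at h3'
        rcases hswap e du2 h3' with ⟨h4, h5⟩ | ⟨h4, h5⟩
        · exact h4.symm
        · exfalso
          rw [hA2] at h4
          exact hσfix d0 h4
    · -- σ d0 = du2 ∈ F₂ and du1 = d0 ∈ F₁ : first disjunct of FB
      refine ⟨d0, hd0u, hd0v, Or.inl ⟨?_, ?_⟩⟩
      · rw [Set.eq_singleton_iff_unique_mem]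
        refine ⟨⟨hd0u, hB2 ▸ hdu1F⟩, ?_⟩
        rintro e ⟨heu, heF⟩
        obtain ⟨d0', h1', h2', h3'⟩ := hc e du2 ⟨heu, heF⟩ ⟨hdu2, hdu2F⟩
        rw [huv_dart d0' h1' h2'] at h3'
        rcases hswap e du2 h3' with ⟨h4, h5⟩ | ⟨h4, h5⟩
        · exfalso
          apply hne
          rw [← hdu1F, hB2, ← h5, hdu2F]
        · exact h5
      · rw [Set.eq_singleton_iff_unique_mem]
        refine ⟨⟨by rw [hB1]; exact hdu2, by rw [hB1]; exact hdu2F⟩, ?_⟩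
        rintro e ⟨heu, heF⟩
        obtain ⟨d0', h1', h2', h3'⟩ := hc du1 e ⟨hdu1, hdu1F⟩ ⟨heu, heF⟩
        rw [huv_dart d0' h1' h2'] at h3'
        rcases hswap du1 e h3' with ⟨h4, h5⟩ | ⟨h4, h5⟩
        · exfalso
          rw [hB2] at h4
          exact hσfix d0 h4
        · exact h4.symm
  obtain ⟨d₁, d₂, ⟨hd₁u, hd₁F⟩, ⟨hd₂u, hd₂F⟩, hgood⟩ := hchoice
  have hd12 : d₁ ≠ d₂ := fun h => hne (hd₁F ▸ h ▸ hd₂F)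
  have he12 : e₁ ≠ e₂ := fun h => hne (he1F ▸ h ▸ he2F)
  have hfst12 : d₁.fst = d₂.fst := by rw [hd₁u, hd₂u]
  have hfste : e₁.fst = e₂.fst := by rw [he1, he2]
  set τ₁ := Equiv.swap d₁ d₂ with hτ₁
  set τ₂ := Equiv.swap e₁ e₂ with hτ₂
  set σ' := τ₁ * σ with hσ'
  set σ'' := τ₂ * σ' with hσ''
  have hφmul : φ = σ * α := rfl
  -- fst is preserved by σ''
  have hfstσ : ∀ z : G.Dart, (σ z).fst = z.fst := rs.rot_fst
  have hfstσ'' : ∀ z : G.Dart, (σ'' z).fst = z.fst := by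
    intro z
    rw [hσ'', Perm.mul_apply, hσ', Perm.mul_apply, hτ₂, hτ₁,
      swap_fst_preserve hfste, swap_fst_preserve hfst12, hfstσ]
  -- counting part
  have hccσ' : Surg.cc σ' = Surg.cc σ + 1 :=
    Surg.cc_swap_mul_of_sameCycle hd12 (rs.rot_cyclic d₁ d₂ (by rw [hd₁u, hd₂u]))
  have hSCσ'e : σ'.SameCycle e₁ e₂ := by
    apply Surg.sameCycle_congr
    · intro z hz
      have hzv : z.fst = v := by rw [← sameCycle_rot_fst rs hz, he1]
      rw [hσ', Perm.mul_apply]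
      apply Equiv.swap_apply_of_ne_of_ne
      · intro h; rw [← h] at hd₁u; rw [hfstσ, hzv] at hd₁u; exact huv hd₁u.symm
      · intro h; rw [← h] at hd₂u; rw [hfstσ, hzv] at hd₂u; exact huv hd₂u.symm
    · exact rs.rot_cyclic e₁ e₂ (by rw [he1, he2])
  have hccσ'' : Surg.cc σ'' = Surg.cc σ + 2 := by
    rw [hσ'', Surg.cc_swap_mul_of_sameCycle he12 hSCσ'e, hccσ']
  have hnSCφ : ¬ φ.SameCycle d₁ d₂ := by
    intro h
    exact hne (by rw [← hd₁F, ← hd₂F]; exact Quotient.sound h)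
  have hccφ' : Surg.cc (τ₁ * φ) + 1 = Surg.cc φ :=
    Surg.cc_swap_mul_add_one_of_not hd12 hnSCφ
  have hSCφ'd : (τ₁ * φ).SameCycle d₁ d₂ := Surg.sameCycle_swap_mul_of_not hd12 hnSCφ
  have hSCφ'e : (τ₁ * φ).SameCycle e₁ e₂ := by
    have hm : Surg.mrgRel (Surg.cyc φ) d₁ d₂ e₁ e₂ :=
      Or.inr (Or.inl ⟨Quotient.exact (he1F.trans hd₁F.symm),
        Quotient.exact (hd₂F.trans he2F.symm)⟩)
    have hm2 : Surg.mrgRel (Surg.cyc (τ₁ * φ)) d₁ d₂ e₁ e₂ := by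
      rw [hτ₁, Surg.mrg_swap_eq φ d₁ d₂]
      exact hm
    have E := (Surg.cyc (τ₁ * φ)).iseqv
    rcases hm2 with h | ⟨h1, h2⟩ | ⟨h1, h2⟩
    · exact h
    · exact E.trans h1 (E.trans hSCφ'd h2)
    · exact E.trans h1 (E.trans (E.symm hSCφ'd) h2)
  have hccφ'' : Surg.cc (τ₂ * (τ₁ * φ)) = Surg.cc φ := by
    rw [Surg.cc_swap_mul_of_sameCycle he12 hSCφ'e]
    omega
  have hσ''α : σ'' * α = τ₂ * (τ₁ * φ) := by
    rw [hσ'', hσ', hφmul, mul_assoc, mul_assoc]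
  -- transitivity
  have hσ''good : ∀ d0 : G.Dart, d0.fst = u → d0.snd = v → σ'' d0 ≠ d0 := by
    intro d0 h1 h2
    have h3 : (τ₁ (σ d0)).fst = u := by rw [hτ₁, swap_fst_preserve hfst12, hfstσ, h1]
    have h4 : τ₂ (τ₁ (σ d0)) = τ₁ (σ d0) := by
      rw [hτ₂]
      apply Equiv.swap_apply_of_ne_of_ne
      · intro h; rw [h, he1] at h3; exact huv h3.symm
      · intro h; rw [h, he2] at h3; exact huv h3.symm
    rw [hσ'', Perm.mul_apply, hσ', Perm.mul_apply]
    show τ₂ (τ₁ (σ d0)) ≠ d0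
    rw [h4, hτ₁]
    exact hgood d0 h1 h2
  have hagree : ∀ t : G.Dart, t.fst ≠ u → t.fst ≠ v → σ'' t = σ t := by
    intro t htu htv
    have h1 : σ t ≠ d₁ := fun h => htu (by rw [← hfstσ t, h, hd₁u])
    have h2 : σ t ≠ d₂ := fun h => htu (by rw [← hfstσ t, h, hd₂u])
    have h3 : σ t ≠ e₁ := fun h => htv (by rw [← hfstσ t, h, he1])
    have h4 : σ t ≠ e₂ := fun h => htv (by rw [← hfstσ t, h, he2])
    rw [hσ'', Perm.mul_apply, hσ', Perm.mul_apply, hτ₁,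
      Equiv.swap_apply_of_ne_of_ne h1 h2, hτ₂, Equiv.swap_apply_of_ne_of_ne h3 h4]
  have htrans : ∀ da db : G.Dart, (Surg.connSetoid σ'' α).r da db := by
    have E := Surg.conn_equivalence σ'' α
    -- darts at a common vertex other than u,v are connected
    have hvert : ∀ z z' : G.Dart, z.fst = z'.fst → z.fst ≠ u → z.fst ≠ v →
        (Surg.connSetoid σ'' α).r z z' := by
      intro z z' h hzu hzv
      apply Surg.conn_of_sameCycle_left
      apply Surg.sameCycle_congr (f := σ)
      · intro t ht
        have htf : z.fst = t.fst := sameCycle_rot_fst rs ht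
        exact hagree t (htf ▸ hzu) (htf ▸ hzv)
      · exact rs.rot_cyclic z z' h
    -- walk-based connections avoiding u and v
    have hS : ({u, v} : Set V).ncard < 3 := by
      have h5 := Set.ncard_insert_le u ({v} : Set V)
      rw [Set.ncard_singleton] at h5
      omega
    have hconn2 := h3.2 {u, v} hS
    have hmemne : ∀ w : V, w ∈ ({u,v} : Set V)ᶜ → w ≠ u ∧ w ≠ v := by
      intro w hw
      constructor <;> intro h <;> apply hw <;> simp [h]
    have aux : ∀ (x y : (({u,v} : Set V)ᶜ : Set V)) (p : (G.induce (({u,v} : Set V)ᶜ : Set V)).Walk x y)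
        (za zb : G.Dart), za.fst = x.val → zb.fst = y.val →
        (Surg.connSetoid σ'' α).r za zb := by
      intro x y p
      induction p with
      | nil =>
        rename_i x0
        intro za zb ha hb
        exact hvert za zb (by rw [ha, hb]) (ha ▸ (hmemne _ x0.prop).1)
          (ha ▸ (hmemne _ x0.prop).2)
      | cons h q ih =>
        rename_i xs c ys
        intro za zb ha hb
        have hadj : G.Adj xs.val c.val := h
        have c1 := hvert za ⟨(xs.val, c.val), hadj⟩ (by rw [ha]) (ha ▸ (hmemne _ xs.prop).1)
          (ha ▸ (hmemne _ xs.prop).2)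
        have c2 := Surg.conn_step_right (x := σ'') (y := α) (⟨(xs.val, c.val), hadj⟩ : G.Dart)
        have c3 := ih (α ⟨(xs.val, c.val), hadj⟩) zb rfl hb
        exact E.trans c1 (E.trans c2 c3)
    have hreach : ∀ (z z' : G.Dart), z.fst ∉ ({u,v} : Set V) → z'.fst ∉ ({u,v} : Set V) →
        (Surg.connSetoid σ'' α).r z z' := by
      intro z z' hz hz'
      obtain ⟨p⟩ := hconn2.preconnected ⟨z.fst, hz⟩ ⟨z'.fst, hz'⟩
      exact aux _ _ p z z' rfl rfl
    -- base dart away from u,v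
    have hw0 : ∃ w₀ : V, w₀ ∉ ({u,v} : Set V) := by
      by_contra hcw
      push_neg at hcw
      have hsub : (Set.univ : Set V) ⊆ {u, v} := fun w _ => hcw w
      have h4 := Set.ncard_le_ncard hsub (Set.toFinite _)
      rw [Set.ncard_univ] at h4
      have h5 := Set.ncard_insert_le u ({v} : Set V)
      rw [Set.ncard_singleton] at h5
      have h6 := h3.1
      omega
    obtain ⟨w₀, hw₀⟩ := hw0
    obtain ⟨db, hdb⟩ := exists_dart hG hcV w₀
    have hdbm : db.fst ∉ ({u,v} : Set V) := by rw [hdb]; exact hw₀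
    -- darts based at u reach the base dart
    have hstucku : ∀ d : G.Dart, d.fst = u → (Surg.connSetoid σ'' α).r d db := by
      intro d hdu'
      by_cases hex : ∃ t : G.Dart, σ''.SameCycle d t ∧ t.snd ∉ ({u,v} : Set V)
      · obtain ⟨t, ht1, ht2⟩ := hex
        have c1 : (Surg.connSetoid σ'' α).r d t := Surg.conn_of_sameCycle_left ht1
        have c2 := Surg.conn_step_right (x := σ'') (y := α) t
        have c3 := hreach (α t) db ht2 hdbm
        exact E.trans c1 (E.trans c2 c3)
      · push_neg at hex
        have hsnd : ∀ t, σ''.SameCycle d t → t.snd = v := by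
          intro t ht
          have htf : t.fst = u := by rw [← sameCycle_fst_preserve hfstσ'' ht, hdu']
          have h5 := hex t ht
          have h6 : t.snd ≠ u := by
            rw [← htf]
            exact fun hh => G.irrefl (hh ▸ t.adj)
          simp only [Set.mem_insert_iff, Set.mem_singleton_iff] at h5
          tauto
        have hdv : d.snd = v := hsnd d (Equiv.Perm.SameCycle.refl _ _)
        have hσd : σ'' d = d := by
          apply huniq
          · rw [hfstσ'']
          · rw [hsnd (σ'' d) (by simpa using Surg.sameCycle_pow (f := σ'') (x := d) 1), hdv]
        exact absurd hσd (hσ''good d hdu' hdv)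
    have hstuckv : ∀ d : G.Dart, d.fst = v → (Surg.connSetoid σ'' α).r d db := by
      intro d hdv'
      by_cases hex : ∃ t : G.Dart, σ''.SameCycle d t ∧ t.snd ∉ ({u,v} : Set V)
      · obtain ⟨t, ht1, ht2⟩ := hex
        have c1 : (Surg.connSetoid σ'' α).r d t := Surg.conn_of_sameCycle_left ht1
        have c2 := Surg.conn_step_right (x := σ'') (y := α) t
        have c3 := hreach (α t) db ht2 hdbm
        exact E.trans c1 (E.trans c2 c3)
      · push_neg at hex
        have h5 := hex d (Equiv.Perm.SameCycle.refl _ _)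
        have h6 : d.snd ≠ v := by
          rw [← hdv']
          exact fun hh => G.irrefl (hh ▸ d.adj)
        have hdu2' : d.snd = u := by
          simp only [Set.mem_insert_iff, Set.mem_singleton_iff] at h5
          tauto
        have c2 := Surg.conn_step_right (x := σ'') (y := α) d
        have c3 := hstucku (α d) hdu2'
        exact E.trans c2 c3
    have hbase : ∀ d : G.Dart, (Surg.connSetoid σ'' α).r d db := by
      intro d
      by_cases h1 : d.fst = u
      · exact hstucku d h1
      · by_cases h2 : d.fst = v
        · exact hstuckv d h2
        · apply hreach d db _ hdbm
          simp only [Set.mem_insert_iff, Set.mem_singleton_iff]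
          tauto
    intro da db'
    exact E.trans (hbase da) (E.symm (hbase db'))
  -- wrap up
  have hkc : Surg.kc σ'' α = 1 := by
    rw [Surg.kc, Nat.card_eq_one_iff_unique]
    constructor
    · constructor
      rintro ⟨da⟩ ⟨db⟩
      exact Quotient.sound (htrans da db)
    · exact ⟨Quotient.mk _ d₁⟩
  have hineq := Surg.euler_ineq σ'' α
  rw [hkc, hσ''α, hccφ'', hccσ''] at hineq
  have h1 : Surg.cc σ = Nat.card V := cc_rot_eq rs hG hcV
  have h2 : Surg.cc α = Nat.card G.edgeSet := cc_flip_eq G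
  have h3' : Surg.cc φ = rs.numFaces := cc_face_eq rs
  have h4 : Fintype.card G.Dart = 2 * Nat.card G.edgeSet := by
    rw [← Nat.card_eq_fintype_card]
    exact card_dart_eq G
  rw [h1, h2, h3', h4] at hineq
  omega

end Bridge

/-- In a 3-connected plane graph, the bounding cycles of two distinct faces
intersect in the empty set, a single vertex, or a single edge lying on both faces. -/
theorem stmt_7 (G : SimpleGraph V) (P : PlaneEmbedding G) (h3 : IsKConnected 3 G)
    (F₁ F₂ : P.rs.Face) (hne : F₁ ≠ F₂) :
    P.rs.faceVerts F₁ ∩ P.rs.faceVerts F₂ = ∅ ∨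
    (∃ v : V, P.rs.faceVerts F₁ ∩ P.rs.faceVerts F₂ = {v}) ∨
    (∃ a b : V, G.Adj a b ∧ P.rs.faceVerts F₁ ∩ P.rs.faceVerts F₂ = {a, b} ∧
      P.rs.EdgeOnFace F₁ a b ∧ P.rs.EdgeOnFace F₂ a b) := by
  classical
  by_contra hcon
  push_neg at hcon
  obtain ⟨hne1, hne2, hne3⟩ := hcon
  set I := P.rs.faceVerts F₁ ∩ P.rs.faceVerts F₂ with hI
  obtain ⟨u, hu⟩ := hne1
  have hex2 : ∃ w ∈ I, w ≠ u := by
    by_contra hc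
    push_neg at hc
    exact hne2 u (Set.eq_singleton_iff_unique_mem.mpr ⟨hu, hc⟩)
  obtain ⟨v, hv, hvu⟩ := hex2
  have huv : u ≠ v := fun h => hvu h.symm
  by_cases hFBu : FB P.rs F₁ F₂ u v
  · by_cases hFBv : FB P.rs F₁ F₂ v u
    · -- structural case: the two faces share the edge uv
      obtain ⟨duv, hduvu, hduvv, hcase⟩ := hFBu
      obtain ⟨dvu, hdvuv, hdvuu, hcase'⟩ := hFBv
      set σ := P.rs.rot with hσ
      have hsymm : dvu = duv.symm :=
        dart_ext' _ _ (by rw [hdvuv]; exact hduvv.symm) (by rw [hdvuu]; exact hduvu.symm)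
      have hAdj : G.Adj u v := by
        have := duv.adj
        rwa [hduvu, hduvv] at this
      have hkey : P.rs.facePerm dvu = σ duv := by
        show σ (dartFlip G dvu) = σ duv
        congr 1
        rw [hsymm]
        exact SimpleGraph.Dart.symm_symm duv
      have hSCfp : Quotient.mk P.rs.faceSetoid dvu = Quotient.mk P.rs.faceSetoid (σ duv) :=
        Quotient.sound (⟨1, by simpa using hkey⟩ : P.rs.facePerm.SameCycle dvu (σ duv))
      -- extract face memberships
      have hmem : ∀ (A : Set G.Dart) (d : G.Dart), A = {d} → d ∈ A := by
        intro A d h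
        rw [h]
        rfl
      -- the four cases
      have hEoF : P.rs.EdgeOnFace F₁ u v ∧ P.rs.EdgeOnFace F₂ u v := by
        rcases hcase with ⟨hc1, hc2⟩ | ⟨hc1, hc2⟩ <;> rcases hcase' with ⟨hc1', hc2'⟩ | ⟨hc1', hc2'⟩
        · -- duv ∈ F₁, σ duv ∈ F₂, dvu ∈ F₁ : contradiction
          exfalso
          apply hne
          have h1 : Quotient.mk P.rs.faceSetoid dvu = F₁ := (hmem _ _ hc1').2
          have h2 : Quotient.mk P.rs.faceSetoid (σ duv) = F₂ := (hmem _ _ hc2).2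
          rw [← h1, hSCfp, h2]
        · -- duv ∈ F₁, dvu ∈ F₂
          refine ⟨⟨duv, (hmem _ _ hc1).2, Or.inl ⟨hduvu, hduvv⟩⟩,
            ⟨dvu, (hmem _ _ hc1').2, Or.inr ⟨hdvuv, hdvuu⟩⟩⟩
        · -- duv ∈ F₂, dvu ∈ F₁
          refine ⟨⟨dvu, (hmem _ _ hc1').2, Or.inr ⟨hdvuv, hdvuu⟩⟩,
            ⟨duv, (hmem _ _ hc1).2, Or.inl ⟨hduvu, hduvv⟩⟩⟩
        · -- duv ∈ F₂, σ duv ∈ F₁, dvu ∈ F₂ : contradiction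
          exfalso
          apply hne
          have h1 : Quotient.mk P.rs.faceSetoid dvu = F₂ := (hmem _ _ hc1').2
          have h2 : Quotient.mk P.rs.faceSetoid (σ duv) = F₁ := (hmem _ _ hc2).2
          rw [← h2, ← hSCfp, h1]
      have hIne : I ≠ {u, v} := fun hh => hne3 u v hAdj hh hEoF.1 hEoF.2
      have hex3 : ∃ w ∈ I, w ≠ u ∧ w ≠ v := by
        by_contra hc
        push_neg at hc
        apply hIne
        apply Set.eq_of_subset_of_subset
        · intro w hw
          by_cases h1 : w = u
          · exact Or.inl h1
          · exact Or.inr (hc w hw h1)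
        · rintro w (rfl | rfl)
          · exact hu
          · exact hv
      obtain ⟨w, hw, hwu, hwv⟩ := hex3
      -- surgery on the pair (u, w)
      refine surgery P h3 hne (fun h => hwu h.symm) hu.1 hu.2 hw.1 hw.2 ?_
      rintro ⟨duw, hduwu, hduww, hcw⟩
      have hsq := rot_sq_ne P.rs h3 P.connected duv
      have hvw : duv ≠ duw := fun h => hwv (by rw [← hduww, ← h, hduvv])
      have hsing : ∀ d e : G.Dart, ({d} : Set G.Dart) = {e} → d = e := by
        intro d e h
        exact Set.singleton_eq_singleton_iff.mp h
      rcases hcase with ⟨hc1, hc2⟩ | ⟨hc1, hc2⟩ <;> rcases hcw with ⟨hw1, hw2⟩ | ⟨hw1, hw2⟩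
      · exact hvw (hsing _ _ (hc1.symm.trans hw1))
      · -- σ duv = duw and duv = σ duw
        have h1 : σ duv = duw := hsing _ _ (hc2.symm.trans hw1)
        have h2 : duv = σ duw := hsing _ _ (hc1.symm.trans hw2)
        apply hsq
        rw [pow_two, Equiv.Perm.mul_apply, h1, ← h2]
      · -- Su₁ = {σ duv} = {duw}, Su₂ = {duv} = {σ duw}
        have h1 : σ duv = duw := hsing _ _ (hc2.symm.trans hw1)
        have h2 : duv = σ duw := hsing _ _ (hc1.symm.trans hw2)
        apply hsq
        rw [pow_two, Equiv.Perm.mul_apply, h1, ← h2]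
      · exact hvw (hsing _ _ (hc1.symm.trans hw1))
    · exact surgery P h3 hne hvu hv.1 hv.2 hu.1 hu.2 hFBv
  · exact surgery P h3 hne huv hu.1 hu.2 hv.1 hv.2 hFBu
end

section
/- If G is a 4-connected plane graph such that the open neighbourhood N(u) induces a connected subgraph for every vertex u of G, then G does not have a stable minimal cut, i.e., no minimal cut of G is an independent set. -/
open SimpleGraph

variable {V : Type} [Fintype V] [DecidableEq V]

private def homOfSubset' (G : SimpleGraph V) {X Y : Set V} (h : X ⊆ Y) :
    G.induce X →g G.induce Y :=
  ⟨fun v => ⟨v.1, h v.2⟩, fun hadj => hadj⟩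

private lemma reroute (G : SimpleGraph V) (S : Set V) (s : V)
    (hNsub : G.neighborSet s ⊆ Sᶜ)
    (hNconn : (G.induce (G.neighborSet s)).Connected) :
    ∀ n (x y : ↥(S \ {s})ᶜ) (w : (G.induce (S \ {s})ᶜ).Walk x y),
      w.length ≤ n → ∀ (hx : x.1 ∈ Sᶜ) (hy : y.1 ∈ Sᶜ),
      (G.induce Sᶜ).Reachable ⟨x.1, hx⟩ ⟨y.1, hy⟩ := by
  intro n
  induction n with
  | zero =>
    intro x y w hlen hx hy
    cases w with
    | nil => exact Reachable.refl _
    | cons h p => simp [SimpleGraph.Walk.length_cons] at hlen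
  | succ n ih =>
    intro x y w hlen hx hy
    cases w with
    | nil => exact Reachable.refl _
    | @cons _ z _ h p =>
      by_cases hz : (z : V) ∈ Sᶜ
      · have hadj : (G.induce Sᶜ).Adj ⟨x.1, hx⟩ ⟨z.1, hz⟩ := h
        have hlen' : p.length ≤ n := by
          simp [SimpleGraph.Walk.length_cons] at hlen; omega
        exact (hadj.reachable).trans (ih z y p hlen' hz hy)
      · have hzs : (z : V) = s := by
          have hz2 := z.2
          simp only [Set.mem_compl_iff, Set.mem_diff, Set.mem_singleton_iff,
            not_and, not_not] at hz2
          simp only [Set.mem_compl_iff, not_not] at hz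
          exact hz2 hz
        have hxN : x.1 ∈ G.neighborSet s := by
          have hGxz : G.Adj x.1 z.1 := h
          rw [hzs] at hGxz
          exact hGxz.symm
        cases p with
        | nil =>
          exact absurd hy (by rw [← hzs] at *; simp [Set.mem_compl_iff] at hz ⊢; exact hz)
        | @cons _ z' _ h' q =>
          have hz'N : (z' : V) ∈ G.neighborSet s := by
            have hGzz' : G.Adj z.1 z'.1 := h'
            rw [hzs] at hGzz'
            exact hGzz'
          have hz'c : (z' : V) ∈ Sᶜ := hNsub hz'N
          have reach1 : (G.induce Sᶜ).Reachable ⟨x.1, hx⟩ ⟨z'.1, hz'c⟩ := by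
            have := (hNconn.preconnected ⟨x.1, hxN⟩ ⟨z'.1, hz'N⟩).map
              (homOfSubset' G hNsub)
            exact this
          have hlen' : q.length ≤ n := by
            simp [SimpleGraph.Walk.length_cons] at hlen; omega
          exact reach1.trans (ih z' y q hlen' hz'c hy)

/-- A 4-connected plane graph all of whose open neighbourhoods induce
connected subgraphs has no stable (independent) minimal cut. -/
theorem stmt_17 (G : SimpleGraph V) (P : PlaneEmbedding G) (h4 : IsKConnected 4 G)
    (hnbr : ∀ u : V, (G.induce (G.neighborSet u)).Connected) :
    ¬ ∃ S : Set V, IsMinimalCut G S ∧ ∀ a ∈ S, ∀ b ∈ S, ¬ G.Adj a b := by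
  rintro ⟨S, ⟨hcut, hmin⟩, hstab⟩
  -- S is nonempty, else 4-connectivity gives connectivity of G - S
  rcases Set.eq_empty_or_nonempty S with rfl | ⟨s, hs⟩
  · exact hcut (h4.2 ∅ (by simp)).preconnected
  -- neighbours of s avoid S
  have hNsub : G.neighborSet s ⊆ Sᶜ := by
    intro t ht
    intro htS
    exact hstab s hs t htS ht
  have hNconn := hnbr s
  -- T = S \ {s} is a proper subset, so G - T is connected
  have hT : S \ {s} ⊂ S := by
    constructor
    · exact Set.diff_subset
    · intro hsub
      exact (hsub hs).2 rfl
  have hconn := hmin (S \ {s}) hT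
  -- derive that G - S is preconnected, contradiction
  apply hcut
  intro u v
  have hSsub : Sᶜ ⊆ (S \ {s})ᶜ := Set.compl_subset_compl.mpr Set.diff_subset
  have hu : u.1 ∈ (S \ {s})ᶜ := hSsub u.2
  have hv : v.1 ∈ (S \ {s})ᶜ := hSsub v.2
  obtain ⟨w⟩ := hconn.preconnected ⟨u.1, hu⟩ ⟨v.1, hv⟩
  have := reroute G S s hNsub hNconn w.length ⟨u.1, hu⟩ ⟨v.1, hv⟩ w le_rfl u.2 v.2
  simpa using this
end
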